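/- arXiv:1212.5785 — 2 statements merged into one kernel-verified Lean document; each statement's English description precedes it below -/
import Mathlib

section
/- Let ω₁,…,ω_n be roots of unity in ℂ whose average z = (1/n)∑ ω_k is a nonzero algebraic integer. Then all ω_k are equal and z is a root of unity. -/
lemma stmt_2_aux {a : ℝ} (ha : 0 ≤ a) {d : ℕ} (hd : 0 < d) (h : a ^ d = 1) : a = 1 := by
  rcases lt_trichotomy a 1 with hlt | heq | hgt
  · have := pow_lt_one₀ ha hlt hd.ne'; linarith
  · exact heq
  · have := one_lt_pow₀ hgt hd.ne'; linarith

set_option maxHeartbeats 1000000 in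
theorem stmt_2 (n : ℕ) (hn : 0 < n) (ω : Fin n → ℂ)
    (hroot : ∀ k, ∃ d : ℕ, 0 < d ∧ ω k ^ d = 1)
    (z : ℂ) (hz : z = (∑ k, ω k) / n)
    (hz0 : z ≠ 0) (hint : IsIntegral ℤ z) :
    (∀ k l, ω k = ω l) ∧ ∃ d : ℕ, 0 < d ∧ z ^ d = 1 := by
  classical
  have hnC : (n : ℂ) ≠ 0 := Nat.cast_ne_zero.mpr hn.ne'
  have hnR : (0 : ℝ) < n := Nat.cast_pos.mpr hn
  set K := IntermediateField.adjoin ℚ (Set.range ω) with hK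
  have hωK : ∀ k, ω k ∈ K := fun k => IntermediateField.subset_adjoin ℚ _ ⟨k, rfl⟩
  have hzK : z ∈ K := by
    rw [hz]
    exact div_mem (sum_mem fun k _ => hωK k) (IntermediateField.natCast_mem K n)
  haveI : Finite (Set.range ω) := (Set.finite_range ω).to_subtype
  haveI : FiniteDimensional ℚ K := by
    apply IntermediateField.finiteDimensional_adjoin
    rintro x ⟨k, rfl⟩
    obtain ⟨d, hd, hωd⟩ := hroot k
    exact IsIntegral.of_pow hd (hωd ▸ isIntegral_one)
  haveI : NumberField K := ⟨⟩
  set zK : K := ⟨z, hzK⟩ with hzKdef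
  set ωK : Fin n → K := fun k => ⟨ω k, hωK k⟩ with hωKdef
  have hzK0 : zK ≠ 0 := fun h => hz0 (congrArg Subtype.val h)
  have hsum : (n : K) * zK = ∑ k, ωK k := by
    apply Subtype.ext
    push_cast
    show (n : ℂ) * z = ∑ k, ω k
    rw [hz]
    field_simp
  -- every embedding sends zK to something of norm at most 1
  have hle : ∀ φ : K →+* ℂ, ‖φ zK‖ ≤ 1 := by
    intro φ
    have h1 : ∀ k, ‖φ (ωK k)‖ = 1 := by
      intro k
      obtain ⟨d, hd, hωd⟩ := hroot k
      have hpow : (ωK k) ^ d = 1 := by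
        apply Subtype.ext
        push_cast
        exact hωd
      have : ‖φ (ωK k)‖ ^ d = 1 := by
        rw [← norm_pow, ← map_pow, hpow, map_one, norm_one]
      exact stmt_2_aux (norm_nonneg _) hd this
    have h2 : (n : ℂ) * φ zK = ∑ k, φ (ωK k) := by
      rw [← map_natCast φ, ← map_mul, hsum, map_sum]
    have h3 : ‖(n : ℂ) * φ zK‖ ≤ n := by
      rw [h2]
      calc ‖∑ k, φ (ωK k)‖ ≤ ∑ k : Fin n, ‖φ (ωK k)‖ := norm_sum_le _ _
        _ = n := by simp [h1]
    rw [norm_mul, Complex.norm_natCast] at h3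
    nlinarith [norm_nonneg (φ zK)]
  -- zK is integral over ℤ
  have hintK : IsIntegral ℤ zK := by
    have : algebraMap K ℂ zK = z := rfl
    exact (isIntegral_algebraMap_iff (algebraMap K ℂ).injective).mp (this ▸ hint)
  -- the norm argument: each embedding has norm exactly 1
  have hprod : (1 : ℝ) ≤ ∏ σ : K →ₐ[ℚ] ℂ, ‖σ zK‖ := by
    have hnz : Algebra.norm ℚ zK ≠ 0 := by
      rw [Algebra.norm_ne_zero_iff]
      exact hzK0
    obtain ⟨m, hm⟩ := IsIntegrallyClosed.isIntegral_iff.mp (Algebra.isIntegral_norm ℚ hintK)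
    have hm0 : m ≠ 0 := by
      rintro rfl
      simp at hm
      exact hnz hm.symm
    have heq : (algebraMap ℚ ℂ) (Algebra.norm ℚ zK) = ∏ σ : K →ₐ[ℚ] ℂ, σ zK :=
      Algebra.norm_eq_prod_embeddings ℚ ℂ zK
    have hkey : ‖(algebraMap ℚ ℂ) (Algebra.norm ℚ zK)‖ = ∏ σ : K →ₐ[ℚ] ℂ, ‖σ zK‖ := by
      rw [heq, norm_prod]
    rw [← hkey, ← hm, eq_intCast, map_intCast, Complex.norm_intCast]
    exact_mod_cast Int.one_le_abs hm0
  have heq1 : ∀ φ : K →+* ℂ, ‖φ zK‖ = 1 := by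
    have halg : ∀ σ : K →ₐ[ℚ] ℂ, ‖σ zK‖ = 1 := by
      intro σ
      have hle' : ∀ τ : K →ₐ[ℚ] ℂ, ‖τ zK‖ ≤ 1 := fun τ => hle (τ : K →+* ℂ)
      by_contra hne
      have hlt : ‖σ zK‖ < 1 := lt_of_le_of_ne (hle' σ) hne
      have : ∏ τ : K →ₐ[ℚ] ℂ, ‖τ zK‖ < 1 := by
        calc ∏ τ : K →ₐ[ℚ] ℂ, ‖τ zK‖
            = (∏ τ ∈ Finset.univ.erase σ, ‖τ zK‖) * ‖σ zK‖ :=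
              (Finset.prod_erase_mul _ _ (Finset.mem_univ σ)).symm
          _ ≤ 1 * ‖σ zK‖ := by
              apply mul_le_mul_of_nonneg_right _ (norm_nonneg _)
              exact Finset.prod_le_one (fun τ _ => norm_nonneg _) (fun τ _ => hle' τ)
          _ < 1 := by rw [one_mul]; exact hlt
      linarith [hprod]
    intro φ
    exact halg φ.toRatAlgHom
  -- z has norm 1
  have hznorm : ‖z‖ = 1 := heq1 (algebraMap K ℂ)
  have hnsq : Complex.normSq z = 1 := by
    rw [Complex.normSq_eq_norm_sq, hznorm, one_pow]
  -- z is a root of unity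
  obtain ⟨d, hd, hpow⟩ := NumberField.Embeddings.pow_eq_one_of_norm_eq_one K ℂ hintK heq1
  have hzpow : z ^ d = 1 := by
    have := congrArg (algebraMap K ℂ) hpow
    rwa [map_pow, map_one] at this
  refine ⟨?_, d, hd, hzpow⟩
  -- all ω k equal: show ω k = z for all k
  have hωnorm : ∀ k, ‖ω k‖ = 1 := by
    intro k
    obtain ⟨d', hd', hωd'⟩ := hroot k
    have : ‖ω k‖ ^ d' = 1 := by rw [← norm_pow, hωd', norm_one]
    exact stmt_2_aux (norm_nonneg _) hd' this
  have hωz : ∀ k, ω k = z := by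
    have hre : ∀ k, (ω k * (starRingEnd ℂ) z).re ≤ 1 := by
      intro k
      calc (ω k * (starRingEnd ℂ) z).re ≤ ‖ω k * (starRingEnd ℂ) z‖ := Complex.re_le_norm _
        _ = 1 := by rw [norm_mul, hωnorm k, RCLike.norm_conj, hznorm, one_mul]
    have hsumre : ∑ k, (ω k * (starRingEnd ℂ) z).re = n := by
      have h1 : ∑ k, ω k * (starRingEnd ℂ) z = (n : ℂ) := by
        rw [← Finset.sum_mul]
        have hs : ∑ k, ω k = n * z := by rw [hz]; field_simp
        rw [hs, mul_assoc, Complex.mul_conj, hnsq]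
        norm_num
      have := congrArg Complex.re h1
      rwa [Complex.re_sum] at this
    have hreeq : ∀ k, (ω k * (starRingEnd ℂ) z).re = 1 := by
      by_contra hc
      push_neg at hc
      obtain ⟨j, hj⟩ := hc
      have hjlt : (ω j * (starRingEnd ℂ) z).re < 1 := lt_of_le_of_ne (hre j) hj
      have hlt : ∑ k, (ω k * (starRingEnd ℂ) z).re < ∑ _k : Fin n, (1 : ℝ) :=
        Finset.sum_lt_sum (fun k _ => hre k) ⟨j, Finset.mem_univ j, hjlt⟩
      rw [hsumre] at hlt
      simp at hlt
    intro k
    have hw1 : ω k * (starRingEnd ℂ) z = 1 := by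
      have hnormw : ‖ω k * (starRingEnd ℂ) z‖ = 1 := by
        rw [norm_mul, hωnorm k, RCLike.norm_conj, hznorm, one_mul]
      have hsq : (ω k * (starRingEnd ℂ) z).re ^ 2 + (ω k * (starRingEnd ℂ) z).im ^ 2 = 1 := by
        have h1 := Complex.sq_norm (ω k * (starRingEnd ℂ) z)
        rw [Complex.normSq_apply] at h1
        nlinarith
      have him : (ω k * (starRingEnd ℂ) z).im = 0 := by
        have := hreeq k
        nlinarith
      apply Complex.ext
      · rw [hreeq k, Complex.one_re]
      · rw [him, Complex.one_im]
    have h2 : ω k * ((starRingEnd ℂ) z * z) = z := by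
      rw [← mul_assoc, hw1, one_mul]
    rw [mul_comm ((starRingEnd ℂ) z) z, Complex.mul_conj, hnsq] at h2
    simpa using h2
  intro k l
  rw [hωz k, hωz l]
end

section
/- Let G be a finite group, χ a faithful complex character of G (i.e. its representation has trivial kernel), and let t be the number of distinct values in the set {χ(g) : g ∈ G}. Then every irreducible character of G occurs as a constituent of χ^l for some 0 ≤ l ≤ t−1 (Burnside–Brauer theorem). -/
open CategoryTheory MonoidalCategory Module LinearMap

lemma aux_decomp {M : Type} [AddCommGroup M] [Module ℂ M] [FiniteDimensional ℂ M]
    (A : Module.End ℂ M) (m : ℕ) (hm : m ≠ 0) (hA : A ^ m = 1) :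
    ∃ s : Finset ℂ,
      (∀ μ ∈ s, μ ^ m = 1) ∧
      (∑ μ ∈ s, (finrank ℂ (A.eigenspace μ) : ℂ)) = (finrank ℂ M : ℂ) ∧
      LinearMap.trace ℂ M A = ∑ μ ∈ s, μ * (finrank ℂ (A.eigenspace μ) : ℂ) ∧
      (∀ B : Module.End ℂ M, B * A = 1 →
        LinearMap.trace ℂ M B = ∑ μ ∈ s, μ⁻¹ * (finrank ℂ (A.eigenspace μ) : ℂ)) ∧
      ((∀ μ ∈ s, μ = 1) → A = 1) ∧
      (∀ μ ∈ s, finrank ℂ (A.eigenspace μ) ≠ 0) := by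
  classical
  have hsq : Squarefree (Polynomial.X ^ m - Polynomial.C (1 : ℂ)) :=
    (Polynomial.separable_X_pow_sub_C 1 (by exact_mod_cast hm) one_ne_zero).squarefree
  have hss : A.IsSemisimple := by
    refine Module.End.isSemisimple_of_squarefree_aeval_eq_zero hsq ?_
    simp [hA]
  have hmax : ∀ μ, A.maxGenEigenspace μ = A.eigenspace μ :=
    hss.isFinitelySemisimple.maxGenEigenspace_eq_eigenspace
  have htop : ⨆ μ, A.eigenspace μ = ⊤ := by
    rw [← funext hmax]; exact Module.End.iSup_maxGenEigenspace_eq_top A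
  have hind : iSupIndep A.eigenspace := by
    have := Module.End.independent_genEigenspace A 1
    exact this
  have hfin : {μ | A.eigenspace μ ≠ ⊥}.Finite := WellFoundedGT.finite_ne_bot_of_iSupIndep hind
  have hint : DirectSum.IsInternal A.eigenspace :=
    DirectSum.isInternal_submodule_of_iSupIndep_of_iSup_eq_top hind htop
  -- powers act on eigenvectors
  have hpow : ∀ (k : ℕ) (μ : ℂ) (x : M), x ∈ A.eigenspace μ → (A ^ k) x = μ ^ k • x := by
    intro k μ x hx
    induction k with
    | zero => simp
    | succ n ih =>
        rw [pow_succ', pow_succ']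
        rw [Module.End.mul_apply, ih, map_smul, Module.End.mem_eigenspace_iff.mp hx,
          smul_smul, mul_comm (μ ^ n) μ]
  have hmaps : ∀ (k : ℕ) (μ : ℂ), Set.MapsTo (A ^ k) (A.eigenspace μ) (A.eigenspace μ) := by
    intro k μ x hx
    simp only [SetLike.mem_coe] at hx ⊢
    rw [Module.End.mem_eigenspace_iff, hpow k μ x hx, map_smul,
      Module.End.mem_eigenspace_iff.mp hx, smul_comm]
  have hrestrict : ∀ (k : ℕ) (μ : ℂ),
      LinearMap.trace ℂ (A.eigenspace μ) ((A ^ k).restrict (hmaps k μ))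
        = μ ^ k * (finrank ℂ (A.eigenspace μ) : ℂ) := by
    intro k μ
    have : (A ^ k).restrict (hmaps k μ) = μ ^ k • (1 : Module.End ℂ (A.eigenspace μ)) := by
      ext x
      have := hpow k μ x.1 x.2
      simp only [Subtype.ext_iff, LinearMap.smul_apply, Module.End.one_apply, Submodule.coe_smul]
      exact this
    rw [this, map_smul, trace_one, smul_eq_mul]
  have heig : ∀ μ ∈ hfin.toFinset, μ ^ m = 1 := by
    intro μ hμ
    rw [Set.Finite.mem_toFinset, Set.mem_setOf_eq, Submodule.ne_bot_iff] at hμ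
    obtain ⟨x, hx, hx0⟩ := hμ
    have h1 : (A ^ m) x = μ ^ m • x := hpow m μ x hx
    rw [hA] at h1
    have : (μ ^ m - 1) • x = 0 := by
      rw [sub_smul, one_smul, ← h1]; simp
    rcases smul_eq_zero.mp this with h | h
    · linear_combination h
    · exact absurd h hx0
  have traceA : ∀ k : ℕ, LinearMap.trace ℂ M (A ^ k)
      = ∑ μ ∈ hfin.toFinset, μ ^ k * (finrank ℂ (A.eigenspace μ) : ℂ) := by
    intro k
    rw [trace_eq_sum_trace_restrict' hint hfin (hmaps k)]
    exact Finset.sum_congr rfl fun μ _ => hrestrict k μ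
  refine ⟨hfin.toFinset, heig, ?_, ?_, ?_, ?_, ?_⟩
  · have := traceA 0
    simpa [trace_one] using this.symm
  · have := traceA 1
    simpa using this
  · intro B hB
    have hAm : A ^ (m - 1) * A = 1 := by
      rw [← pow_succ, Nat.sub_add_cancel (Nat.one_le_iff_ne_zero.mpr hm), hA]
    have hAm' : A * A ^ (m - 1) = 1 := by
      rw [← pow_succ', Nat.sub_add_cancel (Nat.one_le_iff_ne_zero.mpr hm), hA]
    have hBeq : B = A ^ (m - 1) := by
      calc B = B * (A * A ^ (m - 1)) := by rw [hAm', mul_one]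
      _ = (B * A) * A ^ (m - 1) := by rw [mul_assoc]
      _ = A ^ (m - 1) := by rw [hB, one_mul]
    rw [hBeq, traceA (m - 1)]
    refine Finset.sum_congr rfl fun μ hμ => ?_
    congr 1
    have h1 : μ * μ ^ (m - 1) = 1 := by
      rw [← pow_succ', Nat.sub_add_cancel (Nat.one_le_iff_ne_zero.mpr hm)]
      exact heig μ hμ
    exact eq_inv_of_mul_eq_one_right h1
  · intro hall
    have h1 : A.eigenspace 1 = ⊤ := by
      rw [eq_top_iff, ← htop]
      refine iSup_le fun μ => ?_
      by_cases hμ : A.eigenspace μ = ⊥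
      · rw [hμ]; exact bot_le
      · have : μ ∈ hfin.toFinset := by rwa [Set.Finite.mem_toFinset]
        rw [hall μ this]
    ext x
    have : x ∈ A.eigenspace 1 := h1 ▸ Submodule.mem_top
    rw [Module.End.mem_eigenspace_iff] at this
    simpa using this
  · intro μ hμ
    rw [Set.Finite.mem_toFinset, Set.mem_setOf_eq] at hμ
    intro h
    exact hμ (Submodule.finrank_eq_zero.mp h)

lemma normSq_eq_one_of_pow {μ : ℂ} {m : ℕ} (hm : m ≠ 0) (h : μ ^ m = 1) :
    Complex.normSq μ = 1 := by
  have h2 : Complex.normSq μ ^ m = 1 := by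
    rw [← map_pow, h, map_one]
  have h3 := Complex.normSq_nonneg μ
  rcases (pow_eq_one_iff_cases.mp h2) with h | h | h
  · omega
  · exact h
  · nlinarith [h.1]

lemma conj_eq_inv_of_pow {μ : ℂ} {m : ℕ} (hm : m ≠ 0) (h : μ ^ m = 1) :
    (starRingEnd ℂ) μ = μ⁻¹ := by
  refine eq_inv_of_mul_eq_one_left ?_
  rw [mul_comm, Complex.mul_conj, normSq_eq_one_of_pow hm h, Complex.ofReal_one]

variable {G : Type} [Group G] [Fintype G]

lemma rho_pow_card (X : FDRep ℂ G) (g : G) : (X.ρ g) ^ (Fintype.card G) = 1 := by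
  rw [← map_pow, pow_card_eq_one, map_one]

lemma char_inv_eq_conj (X : FDRep ℂ G) (g : G) :
    X.character g⁻¹ = (starRingEnd ℂ) (X.character g) := by
  obtain ⟨s, hpow, _, htr, hinv, _, _⟩ :=
    aux_decomp (X.ρ g) (Fintype.card G) Fintype.card_ne_zero (rho_pow_card X g)
  have hBA : X.ρ g⁻¹ * X.ρ g = 1 := by
    rw [← map_mul, inv_mul_cancel, map_one]
  have h1 : X.character g⁻¹
      = ∑ μ ∈ s, μ⁻¹ * (finrank ℂ (Module.End.eigenspace (X.ρ g) μ) : ℂ) := hinv _ hBA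
  have h2 : X.character g
      = ∑ μ ∈ s, μ * (finrank ℂ (Module.End.eigenspace (X.ρ g) μ) : ℂ) := htr
  rw [h1, h2, map_sum]
  refine Finset.sum_congr rfl fun μ hμ => ?_
  rw [map_mul, conj_eq_inv_of_pow Fintype.card_ne_zero (hpow μ hμ), map_natCast]

lemma rho_eq_one_of_char_eq (X : FDRep ℂ G) (g : G)
    (h : X.character g = (finrank ℂ X : ℂ)) : X.ρ g = 1 := by
  obtain ⟨s, hpow, hsum, htr, _, hone, hd⟩ :=
    aux_decomp (X.ρ g) (Fintype.card G) Fintype.card_ne_zero (rho_pow_card X g)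
  set d : ℂ → ℕ := fun μ => finrank ℂ (Module.End.eigenspace (X.ρ g) μ) with hdef
  have habs : ∀ μ' ∈ s, Complex.normSq μ' = 1 := fun μ' hμ' =>
    normSq_eq_one_of_pow Fintype.card_ne_zero (hpow μ' hμ')
  have e1 : ∑ μ' ∈ s, μ'.re * (d μ' : ℝ) = (finrank ℂ X : ℝ) := by
    have := congrArg Complex.re (htr.symm.trans h)
    simpa [Complex.mul_re] using this
  have e2 : ∑ μ' ∈ s, (d μ' : ℝ) = (finrank ℂ X : ℝ) := by
    have := congrArg Complex.re hsum
    simpa using this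
  have hre : ∑ μ' ∈ s, (1 - μ'.re) * (d μ' : ℝ) = 0 := by
    simp only [sub_mul, one_mul, Finset.sum_sub_distrib, e1, e2, sub_self]
  have hterm := (Finset.sum_eq_zero_iff_of_nonneg fun μ' hμ' => by
    have h1 : μ'.re ≤ 1 := by
      have := Complex.re_le_norm μ'
      have h2 : ‖μ'‖ = 1 := by
        have := habs μ' hμ'
        rw [← Complex.sq_norm] at this
        nlinarith [norm_nonneg μ']
      linarith
    exact mul_nonneg (by linarith) (Nat.cast_nonneg _)).mp hre
  refine hone fun μ hμ => ?_
  have h0 := hterm μ hμ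
  have hd0 : (0 : ℝ) < (d μ : ℝ) := by
    have := hd μ hμ
    positivity
  have hre1 : μ.re = 1 := by
    rcases mul_eq_zero.mp h0 with h | h
    · linarith
    · exact absurd h (by positivity)
  have him : μ.im = 0 := by
    have := habs μ hμ
    rw [Complex.normSq_apply, hre1] at this
    nlinarith
  exact Complex.ext hre1 him

noncomputable def tensPow (G : Type) [Group G] (V : FDRep ℂ G) : ℕ → FDRep ℂ G
  | 0 => FDRep.of (Representation.trivial ℂ (G := G) (V := ℂ))
  | (n + 1) => tensPow G V n ⊗ V

lemma tensPow_char (V : FDRep ℂ G) (l : ℕ) (g : G) :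
    (tensPow G V l).character g = (V.character g) ^ l := by
  induction l with
  | zero =>
      show LinearMap.trace ℂ ℂ (1 : Module.End ℂ ℂ) = 1
      simp
  | succ n ih =>
      show (tensPow G V n ⊗ V).character g = _
      rw [FDRep.char_tensor, Pi.mul_apply, ih, pow_succ]

lemma simple_finrank_ne_zero (W : FDRep ℂ G) (hW : Simple W) : finrank ℂ W ≠ 0 := by
  intro h
  rw [finrank_zero_iff] at h
  refine CategoryTheory.id_nonzero W ?_
  letI : Subsingleton ((forget (FGModuleCat ℂ)).obj W.V) := h
  ext x
  exact Subsingleton.elim _ _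

theorem stmt_12 (G : Type) [Group G] [Fintype G] [DecidableEq G]
    (V : FDRep ℂ G) (hfaithful : ∀ g : G, V.ρ g = 1 → g = 1)
    (t : ℕ) (ht : t = (Finset.univ.image V.character).card) :
    ∀ W : FDRep ℂ G, Simple W → ∃ l : ℕ, l ≤ t - 1 ∧
      0 < (∑ g : G, (V.character g) ^ l * (starRingEnd ℂ) (W.character g)).re := by
  classical
  intro W hW
  haveI := hW
  haveI : Invertible ((Fintype.card G : ℂ)) :=
    invertibleOfNonzero (Nat.cast_ne_zero.mpr Fintype.card_ne_zero)
  have hW0 : finrank ℂ W ≠ 0 := simple_finrank_ne_zero W hW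
  by_contra hcon
  push_neg at hcon
  set χ := V.character with hχ
  set S : ℕ → ℂ := fun l => ∑ g : G, χ g ^ l * (starRingEnd ℂ) (W.character g) with hSdef
  -- S l = card G * (multiplicity)
  have hS : ∀ l : ℕ, S l = ((Fintype.card G *
      finrank ℂ (Representation.invariants
        (tensPow G V l ⊗ FDRep.of (Representation.dual W.ρ)).ρ) : ℕ) : ℂ) := by
    intro l
    have havg := FDRep.average_char_eq_finrank_invariants
      (tensPow G V l ⊗ FDRep.of (Representation.dual W.ρ))
    rw [Nat.card_eq_fintype_card, inv_mul_eq_iff_eq_mul₀ (Nat.cast_ne_zero.mpr Fintype.card_ne_zero), ← smul_eq_mul] at havg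
    have hsum : ∑ g : G, (tensPow G V l ⊗ FDRep.of (Representation.dual W.ρ)).character g
        = S l := by
      refine Finset.sum_congr rfl fun g _ => ?_
      rw [FDRep.char_tensor, Pi.mul_apply, tensPow_char, FDRep.char_dual,
        char_inv_eq_conj]
    rw [hsum] at havg
    rw [havg, smul_eq_mul]
    push_cast
    ring
  -- t ≥ 1 and all S l = 0 for l < t
  have himg : χ 1 ∈ Finset.univ.image χ := Finset.mem_image_of_mem _ (Finset.mem_univ 1)
  have ht1 : 1 ≤ t := by rw [ht]; exact Finset.card_pos.mpr ⟨_, himg⟩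
  have hS0 : ∀ l, l < t → S l = 0 := by
    intro l hl
    have h1 : (S l).re ≤ 0 := hcon l (by omega)
    rw [hS l] at h1 ⊢
    rw [Complex.natCast_re] at h1
    have : (Fintype.card G *
      finrank ℂ (Representation.invariants
        (tensPow G V l ⊗ FDRep.of (Representation.dual W.ρ)).ρ)) = 0 := by
      exact_mod_cast le_antisymm h1 (Nat.cast_nonneg _)
    rw [this]; simp
  -- polynomial
  set s := (Finset.univ.image χ).erase (χ 1) with hsdef
  set p := ∏ α ∈ s, (Polynomial.X - Polynomial.C α) with hpdef
  have hdeg : p.natDegree < t := by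
    have : p.natDegree = s.card := by
      rw [hpdef, Polynomial.natDegree_prod _ _ (fun α _ => Polynomial.X_sub_C_ne_zero α)]
      simp [Polynomial.natDegree_X_sub_C]
    rw [this, hsdef, Finset.card_erase_of_mem himg, ← ht]
    omega
  have hT0 : ∑ g : G, p.eval (χ g) * (starRingEnd ℂ) (W.character g) = 0 := by
    have : ∀ g : G, p.eval (χ g) = ∑ l ∈ Finset.range t, p.coeff l * χ g ^ l :=
      fun g => Polynomial.eval_eq_sum_range' hdeg (χ g)
    calc ∑ g : G, p.eval (χ g) * (starRingEnd ℂ) (W.character g)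
        = ∑ g : G, ∑ l ∈ Finset.range t,
            p.coeff l * (χ g ^ l * (starRingEnd ℂ) (W.character g)) := by
          refine Finset.sum_congr rfl fun g _ => ?_
          rw [this g, Finset.sum_mul]
          exact Finset.sum_congr rfl fun l _ => by ring
      _ = ∑ l ∈ Finset.range t, p.coeff l * S l := by
          rw [Finset.sum_comm]
          exact Finset.sum_congr rfl fun l _ => by rw [hSdef, Finset.mul_sum]
      _ = 0 := Finset.sum_eq_zero fun l hl => by
          rw [hS0 l (Finset.mem_range.mp hl), mul_zero]
  have key : p.eval (χ 1) * (starRingEnd ℂ) (W.character 1) = 0 := by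
    rw [← hT0, Finset.sum_eq_single 1]
    · intro g _ hg
      have hne : χ g ≠ χ 1 := by
        intro h
        refine hg (hfaithful g (rho_eq_one_of_char_eq V g ?_))
        rw [← hχ, h, hχ, FDRep.char_one]
      have hmem : χ g ∈ s := Finset.mem_erase.mpr
        ⟨hne, Finset.mem_image_of_mem _ (Finset.mem_univ g)⟩
      have : p.eval (χ g) = 0 := by
        rw [hpdef, Polynomial.eval_prod]
        exact Finset.prod_eq_zero hmem (by simp)
      rw [this, zero_mul]
    · intro h
      exact absurd (Finset.mem_univ 1) h
  have hp1 : p.eval (χ 1) ≠ 0 := by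
    rw [hpdef, Polynomial.eval_prod]
    refine Finset.prod_ne_zero_iff.mpr fun α hα => ?_
    simpa using sub_ne_zero.mpr (Ne.symm (Finset.ne_of_mem_erase hα))
  have hc1 : (starRingEnd ℂ) (W.character 1) ≠ 0 := by
    rw [FDRep.char_one]
    simpa using hW0
  exact mul_ne_zero hp1 hc1 key
end
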